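/- In the 4-state Büchi automaton over alphabet {a} with states p₀,p₁,p₂,p₃, accepting states {p₀,p₂}, initial state p₀, and transitions p₀→p₁, p₁→p₁, p₁→p₂, p₂→p₃, p₃→p₃ (all on a): the automaton does not accept a^ω, but the quotient automaton obtained by merging p₀ and p₁ into a single accepting state q (with transitions q→q, q→p₂, p₂→p₃, p₃→p₃) does accept a^ω. Hence identifying these two states changes the language. -/

import Mathlib

/-- States of the original automaton. -/
inductive S4 : Type | p0 | p1 | p2 | p3
deriving DecidableEq

/-- Transitions (all on the unique letter `a`): `p0→p1, p1→p1, p1→p2, p2→p3, p3→p3`. -/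
def trA : S4 → S4 → Prop
  | .p0, .p1 => True
  | .p1, .p1 => True
  | .p1, .p2 => True
  | .p2, .p3 => True
  | .p3, .p3 => True
  | _, _ => False

/-- Accepting states of the original automaton: `{p0, p2}`. -/
def accA : S4 → Prop := fun s => s = .p0 ∨ s = .p2

/-- States of the quotient automaton, where `q` is the merged class `{p0, p1}`. -/
inductive S3 : Type | q | p2 | p3
deriving DecidableEq

/-- Quotient transitions: `q→q, q→p2, p2→p3, p3→p3`. -/
def trB : S3 → S3 → Prop
  | .q, .q => True
  | .q, .p2 => True
  | .p2, .p3 => True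
  | .p3, .p3 => True
  | _, _ => False

/-- Accepting states of the quotient: `q` (containing the accepting `p0`) and `p2`. -/
def accB : S3 → Prop := fun s => s = .q ∨ s = .p2

/-- The original automaton (initial state `p0`) does not accept `a^ω`, but the quotient
automaton obtained by merging `p0` and `p1` (initial state `q`) does accept `a^ω`. -/
theorem stmt10 :
    (¬ ∃ ρ : ℕ → S4, ρ 0 = .p0 ∧ (∀ i, trA (ρ i) (ρ (i + 1))) ∧
        ∀ n, ∃ m, n ≤ m ∧ accA (ρ m)) ∧
    (∃ ρ : ℕ → S3, ρ 0 = .q ∧ (∀ i, trB (ρ i) (ρ (i + 1))) ∧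
        ∀ n, ∃ m, n ≤ m ∧ accB (ρ m)) := by
  constructor
  · rintro ⟨ρ, h0, hstep, hacc⟩
    have hnot0 : ∀ i, ρ (i + 1) ≠ S4.p0 := by
      intro i h
      have hs := hstep i
      rw [h] at hs
      cases hx : ρ i <;> rw [hx] at hs <;> exact hs
    obtain ⟨m, hm, hacc1⟩ := hacc 1
    have hm2 : ρ m = S4.p2 := by
      rcases hacc1 with h | h
      · obtain ⟨k, rfl⟩ : ∃ k, m = k + 1 := ⟨m - 1, by omega⟩
        exact absurd h (hnot0 k)
      · exact h
    have h3 : ∀ k, ρ (m + 1 + k) = S4.p3 := by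
      intro k
      induction k with
      | zero =>
        have hs := hstep m
        rw [hm2] at hs
        cases h : ρ (m + 1) <;> rw [h] at hs
        · exact hs.elim
        · exact hs.elim
        · exact hs.elim
      | succ k ih =>
        have hs := hstep (m + 1 + k)
        rw [ih] at hs
        cases h : ρ (m + 1 + k + 1) <;> rw [h] at hs
        · exact hs.elim
        · exact hs.elim
        · exact hs.elim
    obtain ⟨m', hm', hacc2⟩ := hacc (m + 1)
    have hp3 : ρ m' = S4.p3 := by
      obtain ⟨k, rfl⟩ : ∃ k, m' = m + 1 + k := ⟨m' - (m + 1), by omega⟩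
      exact h3 k
    rcases hacc2 with h | h <;> rw [hp3] at h <;> exact S4.noConfusion h
  · exact ⟨fun _ => S3.q, rfl, fun i => trivial, fun n => ⟨n, le_refl n, Or.inl rfl⟩⟩
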